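/- Let $r \geq 1$, $k \geq 1$, let $A_1, \ldots, A_k$ be pairwise disjoint $(r+1)$-subsets of $\mathbb{F}_q$ whose union is $A$ with $|A| = k(r+1) = n$, let $g$ be a degree-$(r+1)$ polynomial constant on each $A_i$, and for a message $\mathbf{m} = (m_1, \ldots, m_{kr}) \in \mathbb{F}_q^{kr}$ define the encoding polynomial $f_{\mathbf{m}}(x) = \sum_{i=1}^{r}\sum_{j=0}^{k-1} m_{jr+i}\, g(x)^j x^{i-1}$. Then the code $\mathcal{C} = \{(f_{\mathbf{m}}(a))_{a \in A} : \mathbf{m} \in \mathbb{F}_q^{kr}\}$ has locality $r$: for each $a \in A_i$, the symbol $f_{\mathbf{m}}(a)$ is determined by the $r$ symbols $\{f_{\mathbf{m}}(a') : a' \in A_i \setminus \{a\}\}$ (via interpolation of the degree-$\le r-1$ polynomial $\sum_{i=1}^r (\sum_j m_{jr+i} g(A_i)^j) x^{i-1}$). -/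
import Mathlib


/-- Tamo–Barg codes have locality `r`: with pairwise disjoint `(r+1)`-sets `Aᵢ`,
a degree-`(r+1)` polynomial `g` constant on each `Aᵢ`, and encoding polynomials
`f_m(x) = ∑_{t,s} m_{t,s} g(x)^t x^s` (`0 ≤ s ≤ r-1`, `0 ≤ t ≤ k-1`), each symbol
`f_m(a)` for `a ∈ Aᵢ` is determined by the symbols `{f_m(a') : a' ∈ Aᵢ ∖ {a}}`. -/
theorem stmt_16 (F : Type*) [Field F] [Fintype F] (k r : ℕ) (hk : 0 < k) (hr : 0 < r)
    (a : Fin k → Fin (r + 1) → F)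
    (hdist : Function.Injective fun p : Fin k × Fin (r + 1) => a p.1 p.2)
    (g : Polynomial F) (hdeg : g.natDegree = r + 1)
    (gv : Fin k → F) (hconst : ∀ i j, g.eval (a i j) = gv i) :
    ∀ (i₀ : Fin k) (j₀ : Fin (r + 1)) (m m' : Fin k → Fin r → F),
      (∀ j : Fin (r + 1), j ≠ j₀ →
        (∑ t : Fin k, ∑ s : Fin r,
            m t s * (g.eval (a i₀ j)) ^ (t : ℕ) * (a i₀ j) ^ (s : ℕ)) =
          ∑ t : Fin k, ∑ s : Fin r,
            m' t s * (g.eval (a i₀ j)) ^ (t : ℕ) * (a i₀ j) ^ (s : ℕ)) →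
      (∑ t : Fin k, ∑ s : Fin r,
          m t s * (g.eval (a i₀ j₀)) ^ (t : ℕ) * (a i₀ j₀) ^ (s : ℕ)) =
        ∑ t : Fin k, ∑ s : Fin r,
          m' t s * (g.eval (a i₀ j₀)) ^ (t : ℕ) * (a i₀ j₀) ^ (s : ℕ) := by
  intro i₀ j₀ m m' hloc
  -- the difference polynomial, of degree < r
  set d : Fin r → F := fun s => ∑ t : Fin k, (m t s - m' t s) * (gv i₀) ^ (t : ℕ) with hd
  set p : Polynomial F := ∑ s : Fin r, Polynomial.C (d s) * Polynomial.X ^ (s : ℕ) with hp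
  have heval : ∀ x : F, p.eval x = ∑ s : Fin r, d s * x ^ (s : ℕ) := by
    intro x; simp [hp, Polynomial.eval_finset_sum]
  have hkey : ∀ x : F,
      p.eval x = (∑ t : Fin k, ∑ s : Fin r, m t s * (gv i₀) ^ (t : ℕ) * x ^ (s : ℕ)) -
        ∑ t : Fin k, ∑ s : Fin r, m' t s * (gv i₀) ^ (t : ℕ) * x ^ (s : ℕ) := by
    intro x
    rw [heval]
    have hterm : ∀ s : Fin r, d s * x ^ (s : ℕ) =
        ∑ t : Fin k, (m t s * (gv i₀) ^ (t : ℕ) * x ^ (s : ℕ) -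
          m' t s * (gv i₀) ^ (t : ℕ) * x ^ (s : ℕ)) := by
      intro s
      rw [hd, Finset.sum_mul]
      exact Finset.sum_congr rfl fun t _ => by ring
    rw [Finset.sum_congr rfl fun s _ => hterm s, Finset.sum_comm]
    simp [Finset.sum_sub_distrib]
  have hroot : ∀ j : Fin (r + 1), j ≠ j₀ → p.eval (a i₀ j) = 0 := by
    intro j hj
    rw [hkey, sub_eq_zero]
    have := hloc j hj
    simpa only [hconst] using this
  have hdegp : p.natDegree < r := by
    have hle : p.natDegree ≤ r - 1 :=
      Polynomial.natDegree_sum_le_of_forall_le _ _ fun s _ =>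
        le_trans (Polynomial.natDegree_C_mul_le _ _)
          (le_trans (Polynomial.natDegree_X_pow_le _) (Nat.le_sub_one_of_lt s.2))
    exact lt_of_le_of_lt hle (Nat.sub_lt hr Nat.one_pos)
  have hcard : Fintype.card {j : Fin (r + 1) // j ≠ j₀} = r := by
    simp [Fintype.card_subtype_compl]
  have hinj : Function.Injective fun j : {j : Fin (r + 1) // j ≠ j₀} => a i₀ j.1 := by
    intro x y hxy
    have := hdist (show (fun p : Fin k × Fin (r + 1) => a p.1 p.2) (i₀, x.1) =
      (fun p : Fin k × Fin (r + 1) => a p.1 p.2) (i₀, y.1) from hxy)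
    exact Subtype.ext (congrArg Prod.snd this)
  have hp0 : p = 0 := by
    refine Polynomial.eq_zero_of_natDegree_lt_card_of_eval_eq_zero p hinj
      (fun j => hroot j.1 j.2) ?_
    rw [hcard]; exact hdegp
  have := hkey (a i₀ j₀)
  rw [hp0] at this
  simp only [Polynomial.eval_zero] at this
  have h := (sub_eq_zero.mp this.symm)
  simpa only [hconst] using h
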